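/- Let τ = (1+√5)/2. If K_a and K_b are nonempty compact subsets of ℝ satisfying K_a = (−τ⁻¹)·K_a ∪ (−τ⁻¹)·K_b and K_b = (−τ⁻¹)·K_a − τ⁻¹, then K_a = [τ−2, τ−1] and K_b = [−1, τ−2]. In other words, the Fibonacci internal-space IFS has a unique fixed point among pairs of nonempty compact subsets of ℝ, given by these two intervals. -/

import Mathlib

open Metric Set

/-- Image of a closed interval under a decreasing affine map. -/
lemma image_affine_Icc_neg (a b l u : ℝ) (ha : a < 0) (h : l ≤ u) :
    (fun x : ℝ => a * x + b) '' Set.Icc l u = Set.Icc (a * u + b) (a * l + b) := by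
  ext y
  constructor
  · rintro ⟨x, ⟨hx1, hx2⟩, rfl⟩
    dsimp only
    constructor <;> nlinarith
  · rintro ⟨hy1, hy2⟩
    have ha' : a ≠ 0 := ne_of_lt ha
    refine ⟨(y - b) / a, ⟨?_, ?_⟩, ?_⟩
    · rw [le_div_iff_of_neg ha]; nlinarith
    · rw [div_le_iff_of_neg ha]; nlinarith
    · field_simp; ring
/-- Uniqueness of the attractor of an IFS of two contractions on `ℝ`. -/
lemma unique_attractor (f g : ℝ → ℝ) (r : ℝ) (hr0 : 0 ≤ r) (hr1 : r < 1)
    (hf : ∀ x y : ℝ, dist (f x) (f y) ≤ r * dist x y)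
    (hg : ∀ x y : ℝ, dist (g x) (g y) ≤ r * dist x y)
    (K L : Set ℝ) (hK : K.Nonempty) (hL : L.Nonempty)
    (cK : IsCompact K) (cL : IsCompact L)
    (fixK : K = f '' K ∪ g '' K) (fixL : L = f '' L ∪ g '' L) : K = L := by
  have fin : EMetric.hausdorffEdist K L ≠ ⊤ :=
    Metric.hausdorffEdist_ne_top_of_nonempty_of_bounded hK hL cK.isBounded cL.isBounded
  set H := Metric.hausdorffDist K L with hH
  have hH0 : 0 ≤ H := Metric.hausdorffDist_nonneg
  have key : H ≤ r * H := by
    apply Metric.hausdorffDist_le_of_mem_dist (by positivity)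
    · intro x hx
      rw [fixK] at hx
      rcases hx with ⟨a, haK, rfl⟩ | ⟨a, haK, rfl⟩
      · obtain ⟨b, hbL, hab⟩ := cL.exists_infDist_eq_dist hL a
        refine ⟨f b, by rw [fixL]; exact Or.inl ⟨b, hbL, rfl⟩, ?_⟩
        calc dist (f a) (f b) ≤ r * dist a b := hf a b
          _ ≤ r * H := by
              apply mul_le_mul_of_nonneg_left _ hr0
              rw [← hab]; exact Metric.infDist_le_hausdorffDist_of_mem haK fin
      · obtain ⟨b, hbL, hab⟩ := cL.exists_infDist_eq_dist hL a
        refine ⟨g b, by rw [fixL]; exact Or.inr ⟨b, hbL, rfl⟩, ?_⟩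
        calc dist (g a) (g b) ≤ r * dist a b := hg a b
          _ ≤ r * H := by
              apply mul_le_mul_of_nonneg_left _ hr0
              rw [← hab]; exact Metric.infDist_le_hausdorffDist_of_mem haK fin
    · intro x hx
      rw [fixL] at hx
      have fin' : EMetric.hausdorffEdist L K ≠ ⊤ := by
        rw [show EMetric.hausdorffEdist L K = EMetric.hausdorffEdist K L from EMetric.hausdorffEdist_comm]; exact fin
      rcases hx with ⟨a, haL, rfl⟩ | ⟨a, haL, rfl⟩
      · obtain ⟨b, hbK, hab⟩ := cK.exists_infDist_eq_dist hK a
        refine ⟨f b, by rw [fixK]; exact Or.inl ⟨b, hbK, rfl⟩, ?_⟩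
        calc dist (f a) (f b) ≤ r * dist a b := hf a b
          _ ≤ r * H := by
              apply mul_le_mul_of_nonneg_left _ hr0
              rw [← hab, hH, Metric.hausdorffDist_comm]
              exact Metric.infDist_le_hausdorffDist_of_mem haL fin'
      · obtain ⟨b, hbK, hab⟩ := cK.exists_infDist_eq_dist hK a
        refine ⟨g b, by rw [fixK]; exact Or.inr ⟨b, hbK, rfl⟩, ?_⟩
        calc dist (g a) (g b) ≤ r * dist a b := hg a b
          _ ≤ r * H := by
              apply mul_le_mul_of_nonneg_left _ hr0
              rw [← hab, hH, Metric.hausdorffDist_comm]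
              exact Metric.infDist_le_hausdorffDist_of_mem haL fin'
  have : H = 0 := by nlinarith
  exact (cK.isClosed.hausdorffDist_zero_iff_eq cL.isClosed fin).mp this

/-- The Fibonacci internal-space IFS has a unique fixed point among pairs of
nonempty compact subsets of `ℝ`, namely `([τ-2, τ-1], [-1, τ-2])`. -/
theorem fibonacci_IFS_unique_fixed_point (τ : ℝ) (hτ : τ = (1 + Real.sqrt 5) / 2)
    (Ka Kb : Set ℝ) (hKa : Ka.Nonempty) (hKb : Kb.Nonempty)
    (hca : IsCompact Ka) (hcb : IsCompact Kb)
    (h1 : Ka = (fun x : ℝ => -τ⁻¹ * x) '' Ka ∪ (fun x : ℝ => -τ⁻¹ * x) '' Kb)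
    (h2 : Kb = (fun x : ℝ => -τ⁻¹ * x - τ⁻¹) '' Ka) :
    Ka = Set.Icc (τ - 2) (τ - 1) ∧ Kb = Set.Icc (-1) (τ - 2) := by
  have h5 : Real.sqrt 5 ^ 2 = 5 := Real.sq_sqrt (by norm_num)
  have h5' : (2:ℝ) < Real.sqrt 5 := by nlinarith [Real.sqrt_nonneg 5]
  have h5'' : Real.sqrt 5 < 3 := by nlinarith [Real.sqrt_nonneg 5]
  have hτ2 : τ * τ = τ + 1 := by rw [hτ]; field_simp; nlinarith
  have hτlb : (3:ℝ)/2 < τ := by rw [hτ]; linarith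
  have hτub : τ < 2 := by rw [hτ]; linarith
  have hτpos : (0:ℝ) < τ := by linarith
  have hinv : τ⁻¹ = τ - 1 :=
    inv_eq_of_mul_eq_one_right (by nlinarith)
  have h21 : (τ - 1) * (τ - 1) = 2 - τ := by nlinarith
  -- the two maps of the one-set IFS for Ka
  set f : ℝ → ℝ := fun x => -τ⁻¹ * x with hfdef
  set p : ℝ → ℝ := fun x => -τ⁻¹ * x - τ⁻¹ with hpdef
  have hfa : ∀ x, f x = -(τ-1) * x + 0 := by intro x; simp [hfdef, hinv]
  have hpa : ∀ x, p x = -(τ-1) * x + (-(τ-1)) := by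
    intro x; simp [hpdef, hinv]; ring
  have hgp : ∀ x, f (p x) = (2-τ) * x + (2-τ) := by
    intro x; simp only [hfdef, hpdef, hinv]; linear_combination (x + 1) * h21
  -- Ka is the attractor of {f, f ∘ p}
  have hfix : Ka = f '' Ka ∪ (fun x => (2-τ) * x + (2-τ)) '' Ka := by
    conv_lhs => rw [h1, h2]
    rw [← Set.image_comp]
    congr 1
    exact Set.image_congr' hgp
  -- the candidate interval is also a fixed point
  have hle : τ - 2 ≤ τ - 1 := by linarith
  have hImf : f '' Set.Icc (τ-2) (τ-1) = Set.Icc (τ-2) (2*τ-3) := by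
    have := image_affine_Icc_neg (-(τ-1)) 0 (τ-2) (τ-1) (by linarith) hle
    rw [show (fun x : ℝ => -(τ-1) * x + 0) = f from funext fun x => (hfa x).symm] at this
    rw [this, show -(τ-1) * (τ-1) + 0 = τ - 2 by linear_combination -hτ2,
      show -(τ-1) * (τ-2) + 0 = 2*τ - 3 by linear_combination -hτ2]
  have hImg : (fun x : ℝ => (2-τ) * x + (2-τ)) '' Set.Icc (τ-2) (τ-1)
      = Set.Icc (2*τ-3) (τ-1) := by
    ext y
    constructor
    · rintro ⟨x, ⟨hx1, hx2⟩, rfl⟩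
      dsimp only
      constructor <;> nlinarith
    · rintro ⟨hy1, hy2⟩
      have h2τ : (0:ℝ) < 2 - τ := by linarith
      refine ⟨(y - (2-τ)) / (2-τ), ⟨?_, ?_⟩, ?_⟩
      · rw [le_div_iff₀ h2τ]; nlinarith
      · rw [div_le_iff₀ h2τ]; nlinarith
      · field_simp; ring
  have hfixI : Set.Icc (τ-2) (τ-1) =
      f '' Set.Icc (τ-2) (τ-1) ∪ (fun x : ℝ => (2-τ) * x + (2-τ)) '' Set.Icc (τ-2) (τ-1) := by
    rw [hImf, hImg, Set.Icc_union_Icc_eq_Icc (by linarith) (by linarith)]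
  -- contraction estimates
  have hr0 : (0:ℝ) ≤ τ - 1 := by linarith
  have hr1 : τ - 1 < 1 := by linarith
  have hlipf : ∀ x y : ℝ, dist (f x) (f y) ≤ (τ-1) * dist x y := by
    intro x y
    rw [hfa x, hfa y, Real.dist_eq, Real.dist_eq]
    rw [show -(τ-1) * x + 0 - (-(τ-1) * y + 0) = -(τ-1) * (x - y) by ring, abs_mul,
      abs_neg, abs_of_nonneg hr0]
  have hlipg : ∀ x y : ℝ, dist ((2-τ) * x + (2-τ)) ((2-τ) * y + (2-τ)) ≤ (τ-1) * dist x y := by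
    intro x y
    rw [Real.dist_eq, Real.dist_eq,
      show (2-τ) * x + (2-τ) - ((2-τ) * y + (2-τ)) = (2-τ) * (x - y) by ring, abs_mul,
      abs_of_nonneg (by linarith : (0:ℝ) ≤ 2 - τ)]
    have : |x - y| ≥ 0 := abs_nonneg _
    nlinarith
  have hKaEq : Ka = Set.Icc (τ-2) (τ-1) :=
    unique_attractor f (fun x => (2-τ) * x + (2-τ)) (τ-1) hr0 hr1 hlipf hlipg
      Ka (Set.Icc (τ-2) (τ-1)) hKa (Set.nonempty_Icc.mpr hle) hca isCompact_Icc hfix hfixI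
  refine ⟨hKaEq, ?_⟩
  rw [h2, hKaEq]
  have := image_affine_Icc_neg (-(τ-1)) (-(τ-1)) (τ-2) (τ-1) (by linarith) hle
  rw [show (fun x : ℝ => -(τ-1) * x + (-(τ-1))) = p from funext fun x => (hpa x).symm] at this
  rw [hpdef] at this
  rw [this, show -(τ-1) * (τ-1) + -(τ-1) = -1 by linear_combination -hτ2,
    show -(τ-1) * (τ-2) + -(τ-1) = τ - 2 by linear_combination -hτ2]
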